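/- Let p > 1 and μ > 0 and define S(A) = (μ + |A|)^{p-2} A for 3×3 matrices A. Then there exists C₁ > 0 such that for every matrix A and every matrix B: ∑_{i,j,k,l} (∂S_{ij}/∂A_{kl})(A) B_{ij} B_{kl} ≥ C₁ (μ + |A|)^{p-2} |B|². -/

import Mathlib

open Finset

noncomputable def frobF (A : Fin 3 → Fin 3 → ℝ) : ℝ :=
  Real.sqrt (∑ i, ∑ j, (A i j) ^ 2)

noncomputable def SmapF (μ p : ℝ) (A : Fin 3 → Fin 3 → ℝ) : Fin 3 → Fin 3 → ℝ :=
  fun i j => (μ + frobF A) ^ (p - 2) * A i j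

/-- The unit "basis matrix" with a 1 in entry (k,l). -/
def basisMat (k l : Fin 3) : Fin 3 → Fin 3 → ℝ :=
  fun a b => if a = k ∧ b = l then 1 else 0

namespace S2aux

abbrev Mat := Fin 3 → Fin 3 → ℝ

noncomputable def dotM (A B : Mat) : ℝ := ∑ i, ∑ j, A i j * B i j

noncomputable def qsum (A : Mat) : ℝ := ∑ i, ∑ j, (A i j) ^ 2

lemma frobF_eq (A : Mat) : frobF A = Real.sqrt (qsum A) := rfl

lemma qsum_nonneg (A : Mat) : 0 ≤ qsum A := by
  unfold qsum; positivity

lemma frobF_nonneg (A : Mat) : 0 ≤ frobF A := Real.sqrt_nonneg _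

lemma frobF_sq (A : Mat) : frobF A ^ 2 = qsum A := Real.sq_sqrt (qsum_nonneg A)

lemma qsum_eq_dot (A : Mat) : qsum A = dotM A A := by simp [qsum, dotM, sq]

lemma qsum_pos (A : Mat) (hA : A ≠ 0) : 0 < qsum A := by
  rcases (qsum_nonneg A).lt_or_eq with h | h
  · exact h
  · exfalso; apply hA
    funext i j
    have h' : ∀ i ∈ (univ : Finset (Fin 3)), (0:ℝ) ≤ ∑ j, (A i j)^2 := by
      intro i _; positivity
    have hi := (Finset.sum_eq_zero_iff_of_nonneg h').1 h.symm i (mem_univ i)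
    have h'' : ∀ j ∈ (univ : Finset (Fin 3)), (0:ℝ) ≤ (A i j)^2 := by
      intro j _; positivity
    have hj := (Finset.sum_eq_zero_iff_of_nonneg h'').1 hi j (mem_univ j)
    have := pow_eq_zero_iff (n := 2) (by norm_num) |>.1 hj
    simpa using this


noncomputable def ev (i j : Fin 3) : Mat →L[ℝ] ℝ :=
  (ContinuousLinearMap.proj (R := ℝ) (φ := fun _ : Fin 3 => ℝ) j).comp
    (ContinuousLinearMap.proj (R := ℝ) (φ := fun _ : Fin 3 => Fin 3 → ℝ) i)

lemma ev_apply (i j : Fin 3) (A : Mat) : ev i j A = A i j := rfl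

noncomputable def qder (A : Mat) : Mat →L[ℝ] ℝ := ∑ i, ∑ j, (2 * A i j) • ev i j

lemma qder_apply (A H : Mat) : qder A H = 2 * dotM A H := by
  simp [qder, dotM, ContinuousLinearMap.sum_apply, ev_apply, Finset.mul_sum, mul_assoc]

lemma hasFDerivAt_qsum (A : Mat) : HasFDerivAt qsum (qder A) A := by
  have h : ∀ i ∈ (univ : Finset (Fin 3)), ∀ j ∈ (univ : Finset (Fin 3)),
      HasFDerivAt (fun A : Mat => (A i j)^2) ((2 * A i j) • ev i j) A := by
    intro i _ j _
    have h := (ev i j).hasFDerivAt (x := A)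
    have h2 := h.mul h
    have : (fun y : Mat => ev i j y * ev i j y) = fun y : Mat => (y i j)^2 := by
      funext y; simp [ev_apply, sq]
    rw [show (⇑(ev i j) * ⇑(ev i j)) = fun y : Mat => ev i j y * ev i j y from rfl, this] at h2
    exact h2.congr_fderiv (by rw [two_mul, add_smul, ev_apply])
  have := HasFDerivAt.sum (u := (univ : Finset (Fin 3)))
    (A := fun i (A : Mat) => ∑ j, (A i j)^2)
    (A' := fun i => ∑ j, (2 * A i j) • ev i j)
    (fun i hi => HasFDerivAt.sum (fun j hj => h i hi j hj))
  exact this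


lemma hasFDerivAt_frobF (A : Mat) (hA : A ≠ 0) :
    HasFDerivAt frobF ((1 / (2 * Real.sqrt (qsum A))) • qder A) A := by
  have hq : qsum A ≠ 0 := (qsum_pos A hA).ne'
  exact (Real.hasDerivAt_sqrt hq).comp_hasFDerivAt A (hasFDerivAt_qsum A)

lemma hasFDerivAt_gfun (μ p : ℝ) (hμ : 0 < μ) (A : Mat) (hA : A ≠ 0) :
    HasFDerivAt (fun A : Mat => (μ + frobF A) ^ (p - 2))
      (((p - 2) * (μ + frobF A) ^ (p - 2 - 1)) •
        ((1 / (2 * Real.sqrt (qsum A))) • qder A)) A := by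
  have hb : (0:ℝ) < μ + frobF A := by
    have := frobF_nonneg A; linarith
  have h2 : HasDerivAt (fun s : ℝ => s ^ (p - 2))
      ((p - 2) * (μ + frobF A) ^ (p - 2 - 1)) (μ + frobF A) :=
    Real.hasDerivAt_rpow_const (Or.inl hb.ne')
  have h1 : HasDerivAt (fun t : ℝ => μ + t) 1 (frobF A) :=
    (hasDerivAt_id (frobF A)).const_add μ
  have h3 := h2.comp (frobF A) h1
  have h4 := h3.comp_hasFDerivAt A (hasFDerivAt_frobF A hA)
  simpa [Function.comp_def, mul_one] using h4

noncomputable def Dmat (μ p : ℝ) (A : Mat) : Mat →L[ℝ] Mat :=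
  ((μ + frobF A) ^ (p - 2)) • ContinuousLinearMap.id ℝ Mat +
    ((((p - 2) * (μ + frobF A) ^ (p - 2 - 1)) •
        ((1 / (2 * Real.sqrt (qsum A))) • qder A)).smulRight A)

lemma SmapF_eq_smul (μ p : ℝ) : SmapF μ p = fun A : Mat =>
    ((μ + frobF A) ^ (p - 2)) • A := by
  funext A i j; rfl

lemma hasFDerivAt_SmapF (μ p : ℝ) (hμ : 0 < μ) (A : Mat) (hA : A ≠ 0) :
    HasFDerivAt (SmapF μ p) (Dmat μ p A) A := by
  rw [SmapF_eq_smul]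
  have h := (hasFDerivAt_gfun μ p hμ A hA).smul (hasFDerivAt_id A)
  simpa [Dmat] using h

lemma Dmat_apply (μ p : ℝ) (A B : Mat) (i j : Fin 3) :
    Dmat μ p A B i j = (μ + frobF A) ^ (p - 2) * B i j +
      ((p - 2) * (μ + frobF A) ^ (p - 2 - 1) *
        (1 / (2 * Real.sqrt (qsum A))) * (2 * dotM A B)) * A i j := by
  simp [Dmat, qder_apply, mul_assoc]


lemma frobF_zero : frobF (0 : Mat) = 0 := by
  simp [frobF]

lemma continuous_qsum : Continuous qsum := by
  apply continuous_finset_sum; intro i _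
  apply continuous_finset_sum; intro j _
  exact ((continuous_apply j).comp (continuous_apply i)).pow 2

lemma continuous_frobF : Continuous frobF :=
  Real.continuous_sqrt.comp continuous_qsum

lemma hasFDerivAt_SmapF_zero (μ p : ℝ) (hμ : 0 < μ) :
    HasFDerivAt (SmapF μ p)
      (((μ + frobF (0:Mat)) ^ (p - 2)) • ContinuousLinearMap.id ℝ Mat) 0 := by
  rw [hasFDerivAt_iff_isLittleO_nhds_zero]
  have heq : (fun h : Mat => SmapF μ p (0 + h) - SmapF μ p 0 -
      (((μ + frobF (0:Mat)) ^ (p - 2)) • ContinuousLinearMap.id ℝ Mat) h)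
      = fun h : Mat => ((μ + frobF h) ^ (p - 2) - (μ + frobF (0:Mat)) ^ (p - 2)) • h := by
    funext h; funext i j
    simp [SmapF, frobF_zero, sub_mul]
  rw [heq]
  rw [Asymptotics.isLittleO_iff]
  intro c hc
  have hcont : Filter.Tendsto (fun h : Mat => (μ + frobF h) ^ (p - 2) - (μ + frobF (0:Mat)) ^ (p - 2))
      (nhds 0) (nhds 0) := by
    have h1 : ContinuousAt (fun x : ℝ => x ^ (p - 2)) (μ + frobF (0:Mat)) := by
      apply Real.continuousAt_rpow_const
      left
      rw [frobF_zero]; positivity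
    have h2 : Filter.Tendsto (fun h : Mat => μ + frobF h) (nhds 0) (nhds (μ + frobF (0:Mat))) :=
      (continuous_const.add continuous_frobF).tendsto 0
    have h3 := (h1.tendsto.comp h2).sub (tendsto_const_nhds (x := (μ + frobF (0:Mat)) ^ (p - 2)) (f := (nhds (0:Mat))))
    simpa using h3
  have hev := (NormedAddCommGroup.tendsto_nhds_zero.mp hcont) c hc
  filter_upwards [hev] with h hh
  rw [norm_smul]
  have : ‖(μ + frobF h) ^ (p - 2) - (μ + frobF (0:Mat)) ^ (p - 2)‖ ≤ c := le_of_lt hh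
  exact mul_le_mul_of_nonneg_right this (norm_nonneg h)

lemma basis_expand (B : Mat) : ∑ k, ∑ l, B k l • basisMat k l = B := by
  funext a b
  simp only [Finset.sum_apply, Pi.smul_apply, basisMat, smul_eq_mul, mul_ite, mul_one, mul_zero]
  simp [ite_and]

lemma quad_eq (D : Mat →L[ℝ] Mat) (B : Mat) :
    ∑ i, ∑ j, ∑ k, ∑ l, (D (basisMat k l)) i j * B i j * B k l
      = ∑ i, ∑ j, (D B) i j * B i j := by
  have hDB : ∀ i j, (D B) i j = ∑ k, ∑ l, B k l * (D (basisMat k l)) i j := by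
    intro i j
    conv_lhs => rw [← basis_expand B]
    simp [map_sum, map_smul, Finset.sum_apply]
  refine Finset.sum_congr rfl (fun i _ => Finset.sum_congr rfl (fun j _ => ?_))
  rw [hDB i j, Finset.sum_mul]
  refine Finset.sum_congr rfl (fun k _ => ?_)
  rw [Finset.sum_mul]
  refine Finset.sum_congr rfl (fun l _ => ?_)
  ring

lemma cs (A B : Mat) : (dotM A B)^2 ≤ qsum A * qsum B := by
  have h := Finset.sum_mul_sq_le_sq_mul_sq (univ : Finset (Fin 3 × Fin 3))
    (fun q => A q.1 q.2) (fun q => B q.1 q.2)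
  simpa [dotM, qsum, Fintype.sum_prod_type] using h

lemma dotM_self_nonneg (B : Mat) : 0 ≤ dotM B B := by
  rw [← qsum_eq_dot]; exact qsum_nonneg B

end S2aux

open S2aux

/-- Ellipticity of the derivative of the p-structure tensor, μ > 0, p > 1. -/
theorem statement2 (p μ : ℝ) (hp : 1 < p) (hμ : 0 < μ) :
    ∃ C₁ : ℝ, 0 < C₁ ∧ ∀ A B : Fin 3 → Fin 3 → ℝ,
      C₁ * (μ + frobF A) ^ (p - 2) * (frobF B) ^ 2 ≤
        ∑ i, ∑ j, ∑ k, ∑ l,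
          (fderiv ℝ (SmapF μ p) A (basisMat k l)) i j * B i j * B k l := by
  refine ⟨min 1 (p - 1), lt_min one_pos (by linarith), fun A B => ?_⟩
  set C₁ : ℝ := min 1 (p - 1) with hC₁def
  have hC1 : C₁ ≤ 1 := min_le_left _ _
  have hC2 : C₁ ≤ p - 1 := min_le_right _ _
  have hfB : (frobF B) ^ 2 = dotM B B := by rw [frobF_sq, qsum_eq_dot]
  have hdB : 0 ≤ dotM B B := dotM_self_nonneg B
  by_cases hA : A = 0
  · subst hA
    rw [(hasFDerivAt_SmapF_zero μ p hμ).fderiv, quad_eq]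
    have hsum : ∑ i, ∑ j, (((μ + frobF (0:Mat)) ^ (p - 2)) • ContinuousLinearMap.id ℝ Mat) B i j * B i j
        = (μ + frobF (0:Mat)) ^ (p - 2) * dotM B B := by
      simp [dotM, Finset.mul_sum, mul_assoc]
    rw [hsum, hfB]
    have hg : 0 < (μ + frobF (0:Mat)) ^ (p - 2) := by
      apply Real.rpow_pos_of_pos; rw [frobF_zero]; positivity
    nlinarith [mul_nonneg (mul_nonneg (sub_nonneg.2 hC1) hg.le) hdB]
  · rw [(hasFDerivAt_SmapF μ p hμ A hA).fderiv, quad_eq]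
    set n : ℝ := frobF A with hn_def
    have hn : 0 < n := Real.sqrt_pos.mpr (qsum_pos A hA)
    have hsqrt : Real.sqrt (qsum A) = n := rfl
    set t : ℝ := μ + n with ht_def
    have ht : 0 < t := by positivity
    set u : ℝ := t ^ (p - 2 - 1) with hu_def
    have hu : 0 < u := Real.rpow_pos_of_pos ht _
    have hut : t ^ (p - 2) = u * t := by
      have h1 : p - 2 = (p - 2 - 1) + 1 := by ring
      rw [h1, Real.rpow_add_one ht.ne']
    set dAB : ℝ := dotM A B with hdAB_def
    set dB : ℝ := dotM B B with hdB_def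
    have hsum : ∑ i, ∑ j, Dmat μ p A B i j * B i j
        = t ^ (p - 2) * dB + ((p - 2) * u * (1 / (2 * n)) * (2 * dAB)) * dAB := by
      have e1 : ∀ (c : ℝ) (M : Mat), (∑ i, ∑ j, (c * M i j) * B i j) = c * dotM M B := by
        intro c M; simp [dotM, Finset.mul_sum, mul_assoc]
      calc ∑ i, ∑ j, Dmat μ p A B i j * B i j
          = ∑ i, ∑ j, ((t ^ (p - 2) * B i j) * B i j
              + (((p - 2) * u * (1 / (2 * n)) * (2 * dAB)) * A i j) * B i j) := by
            refine Finset.sum_congr rfl fun i _ => Finset.sum_congr rfl fun j _ => ?_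
            rw [Dmat_apply]
            rw [hsqrt]
            ring
        _ = (∑ i, ∑ j, (t ^ (p - 2) * B i j) * B i j)
              + ∑ i, ∑ j, (((p - 2) * u * (1 / (2 * n)) * (2 * dAB)) * A i j) * B i j := by
            rw [← Finset.sum_add_distrib]
            exact Finset.sum_congr rfl fun i _ => Finset.sum_add_distrib
        _ = t ^ (p - 2) * dB + ((p - 2) * u * (1 / (2 * n)) * (2 * dAB)) * dAB := by
            rw [e1, e1]
    rw [hsum, hfB, hut]
    have hkey : (p - 2) * u * (1 / (2 * n)) * (2 * dAB) * dAB = ((p - 2) * u * dAB ^ 2) / n := by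
      field_simp
    rw [hkey, ← sub_nonneg]
    have hexp : u * t * dB + (p - 2) * u * dAB ^ 2 / n - C₁ * (u * t) * dB
        = (u * t * dB * n + (p - 2) * u * dAB ^ 2 - C₁ * (u * t) * dB * n) / n := by
      field_simp
    rw [hexp]
    apply div_nonneg _ hn.le
    have hCS : dAB ^ 2 ≤ n ^ 2 * dB := by
      have := cs A B
      rw [← frobF_sq, ← hn_def, qsum_eq_dot, ← hdB_def] at this
      exact this
    rcases le_or_gt 2 p with hp2 | hp2
    · have h1 : 0 ≤ (1 - C₁) * (u * t * dB * n) :=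
        mul_nonneg (by linarith) (mul_nonneg (mul_nonneg (mul_nonneg hu.le ht.le) hdB) hn.le)
      have h2 : 0 ≤ (p - 2) * (u * dAB ^ 2) :=
        mul_nonneg (by linarith) (mul_nonneg hu.le (sq_nonneg _))
      nlinarith
    · have h5 : (2 - p) * u * dAB ^ 2 ≤ (2 - p) * u * (n ^ 2 * dB) := by
        exact mul_le_mul_of_nonneg_left hCS (mul_nonneg (by linarith) hu.le)
      have h7 : 0 ≤ t * (1 - C₁) + (p - 2) * n := by
        have h8 : t * (2 - p) ≤ t * (1 - C₁) :=
          mul_le_mul_of_nonneg_left (by linarith) ht.le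
        have h9 : t * (2 - p) = (2 - p) * μ + (2 - p) * n := by rw [ht_def]; ring
        nlinarith
      have h6 : 0 ≤ u * n * dB := mul_nonneg (mul_nonneg hu.le hn.le) hdB
      nlinarith [mul_nonneg h6 h7]
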